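/- Let P be a finite 2-group that is dihedral, semidihedral, or generalized quaternion of order at least 16. Then for every power 2ⁿ with 1 < 2ⁿ < |P|/2, P has exactly one normal subgroup of order 2ⁿ, and that subgroup is cyclic. -/

import Mathlib

open Subgroup

/-- `P` is a dihedral `2`-group (of order `2 ^ (n + 1)`). -/
def IsDihedral2Group (P : Type*) [Group P] : Prop :=
  ∃ n : ℕ, 2 ≤ n ∧ Nonempty (P ≃* DihedralGroup (2 ^ n))

/-- `P` is a generalized quaternion `2`-group (of order `2 ^ (n + 2)`). -/
def IsGeneralizedQuaternion2Group (P : Type*) [Group P] : Prop :=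
  ∃ n : ℕ, 1 ≤ n ∧ Nonempty (P ≃* QuaternionGroup (2 ^ n))

/-- `P` is a semidihedral `2`-group: it has order `2 ^ n` (`n ≥ 4`) and is generated by
elements `r`, `s` with `r` of order `2 ^ (n - 1)`, `s` of order `2` and
`s * r * s⁻¹ = r ^ (2 ^ (n - 2) - 1)`. -/
def IsSemidihedralGroup (P : Type*) [Group P] : Prop :=
  ∃ n : ℕ, 4 ≤ n ∧ Nat.card P = 2 ^ n ∧
    ∃ r s : P, orderOf r = 2 ^ (n - 1) ∧ orderOf s = 2 ∧
      s * r * s⁻¹ = r ^ (2 ^ (n - 2) - 1) ∧ Subgroup.closure {r, s} = ⊤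

lemma my_isCyclic_zpowers {G : Type*} [Group G] (g : G) : IsCyclic (Subgroup.zpowers g) := by
  refine ⟨⟨⟨g, mem_zpowers g⟩, ?_⟩⟩
  rintro ⟨x, hx⟩
  obtain ⟨k, rfl⟩ := hx
  exact ⟨k, Subtype.ext (by simp)⟩

lemma core {P : Type*} [Group P] [Finite P] (m : ℕ) (hm : 3 ≤ m)
    (hcard : Nat.card P = 2 ^ m) (r s : P) (hr : orderOf r = 2 ^ (m - 1))
    (hcl : Subgroup.closure {r, s} = ⊤) (t : ℤ)
    (hconj : s * r * s⁻¹ = r ^ t) (ht2 : r ^ (t * t) = r)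
    (h1t : orderOf (r ^ (1 - t)) = 2 ^ (m - 2)) :
    ∀ n : ℕ, 1 < 2 ^ n → 2 ^ n < Nat.card P / 2 →
      ∃ N : Subgroup P, N.Normal ∧ Nat.card N = 2 ^ n ∧ IsCyclic N ∧
        ∀ M : Subgroup P, M.Normal → Nat.card M = 2 ^ n → M = N := by
  intro n hn1 hn2
  have h2 : (2:ℕ) ^ m = 2 * 2 ^ (m - 1) := by
    conv_lhs => rw [show m = (m-1)+1 by omega]
    rw [pow_succ]; ring
  have hn2' : 2 ^ n < 2 ^ (m - 1) := by
    rw [hcard, h2, Nat.mul_div_cancel_left _ two_pos] at hn2; exact hn2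
  have hnm : n ≤ m - 2 := by
    by_contra hcon
    have : (2:ℕ) ^ (m-1) ≤ 2 ^ n := Nat.pow_le_pow_right (by norm_num) (by omega)
    omega
  set k := m - 1 - n with hk
  have hkn : k + n = m - 1 := by omega
  set g := r ^ (2:ℕ) ^ k with hg
  have hordg : orderOf g = 2 ^ n := by
    rw [hg, orderOf_pow, hr, Nat.gcd_eq_right (pow_dvd_pow 2 (by omega)),
      Nat.pow_div (by omega) two_pos]
    congr 1; omega
  have hcardN : Nat.card (zpowers g) = 2 ^ n := by rw [Nat.card_zpowers, hordg]
  -- conjugation facts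
  have hconj2 : s⁻¹ * r * s = r ^ t := by
    have h1 : s * r ^ t * s⁻¹ = r := by
      rw [← conj_zpow, hconj, ← zpow_mul]; exact ht2
    calc s⁻¹ * r * s = s⁻¹ * (s * r ^ t * s⁻¹) * s := by rw [h1]
      _ = r ^ t := by group
  have hsgs : s * g * s⁻¹ = g ^ t := by
    rw [hg, ← zpow_natCast r, ← conj_zpow, hconj, ← zpow_mul, ← zpow_mul, mul_comm]
  have hsgs' : s⁻¹ * g * s = g ^ t := by
    have e : (s⁻¹ * g * s) = s⁻¹ * g * s⁻¹⁻¹ := by rw [inv_inv]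
    rw [e, hg, ← zpow_natCast r, ← conj_zpow]
    rw [show s⁻¹ * r * s⁻¹⁻¹ = s⁻¹ * r * s by rw [inv_inv], hconj2,
      ← zpow_mul, ← zpow_mul, mul_comm]
  have hmem_norm : ∀ x : P, (x * g * x⁻¹ ∈ zpowers g) → (x⁻¹ * g * x ∈ zpowers g) →
      x ∈ normalizer (zpowers g : Set P) := by
    intro x h1 h2'
    rw [mem_normalizer_iff]
    intro h
    constructor
    · rintro ⟨j, rfl⟩
      obtain ⟨c, hc⟩ := mem_zpowers_iff.mp h1
      have : x * g ^ j * x⁻¹ = g ^ (c * j) := by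
        rw [← conj_zpow, ← hc, ← zpow_mul]
      exact this ▸ zpow_mem (mem_zpowers g) _
    · intro hh
      obtain ⟨c, hc⟩ := mem_zpowers_iff.mp h2'
      obtain ⟨j, hj⟩ := mem_zpowers_iff.mp hh
      have e : (x⁻¹ * g * x) ^ j = x⁻¹ * g ^ j * x := by
        have := conj_zpow (i := j) (a := x⁻¹) (b := g)
        rwa [inv_inv] at this
      have : h = g ^ (c * j) := by
        have h3 : h = x⁻¹ * g ^ j * x := by rw [hj]; group
        rw [h3, ← e, ← hc, ← zpow_mul]
      exact this ▸ zpow_mem (mem_zpowers g) _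
  have hnorm : (zpowers g).Normal := by
    refine normalizer_eq_top_iff.mp (le_antisymm le_top ?_)
    rw [← hcl, closure_le]
    intro x hx
    simp only [Set.mem_insert_iff, Set.mem_singleton_iff] at hx
    rw [SetLike.mem_coe]
    rcases hx with rfl | rfl
    · refine hmem_norm x ?_ ?_
      · have hc : Commute x g := (Commute.refl x).pow_right _
        rw [hc.eq, mul_inv_cancel_right]
        exact mem_zpowers g
      · have hc : Commute x⁻¹ g := ((Commute.refl x).pow_right _).inv_left
        rw [hc.eq, inv_mul_cancel_right]
        exact mem_zpowers g
    · exact hmem_norm x (hsgs ▸ zpow_mem (mem_zpowers g) t)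
        (hsgs' ▸ zpow_mem (mem_zpowers g) t)
  -- s not in zpowers r
  have hcardH : Nat.card (zpowers r) = 2 ^ (m - 1) := by rw [Nat.card_zpowers, hr]
  have hsr : s ∉ zpowers r := by
    intro hs
    have htop : zpowers r = ⊤ := by
      refine le_antisymm le_top ?_
      rw [← hcl, closure_le]
      intro x hx
      simp only [Set.mem_insert_iff, Set.mem_singleton_iff] at hx
      rcases hx with rfl | rfl
      exacts [mem_zpowers x, hs]
    have := hcardH
    rw [htop, Subgroup.card_top, hcard] at this
    omega
  have hindex : (zpowers r).index = 2 := by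
    have h1 := Subgroup.card_mul_index (zpowers r)
    rw [hcardH, hcard, h2] at h1
    have h3 : (2:ℕ) ^ (m-1) * (zpowers r).index = 2 ^ (m-1) * 2 := by omega
    exact Nat.eq_of_mul_eq_mul_left (by positivity) h3
  refine ⟨zpowers g, hnorm, hcardN, my_isCyclic_zpowers g, ?_⟩
  intro M hM hMcard
  have hMr : M ≤ zpowers r := by
    by_contra hc
    obtain ⟨x, hxM, hxr⟩ := SetLike.not_le_iff_exists.mp hc
    have hsx : s⁻¹ * x ∈ zpowers r := by
      rw [Subgroup.mul_mem_iff_of_index_two hindex]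
      simp only [inv_mem_iff]
      exact iff_of_false hsr hxr
    obtain ⟨i, hi⟩ := mem_zpowers_iff.mp hsx
    have hx : x = s * r ^ i := by rw [hi]; group
    have hcomm : r * x * r⁻¹ * x⁻¹ = r ^ (1 - t) := by
      have e1 : r * x * r⁻¹ * x⁻¹ = r * (s * r⁻¹ * s⁻¹) := by
        rw [hx]; group
      have e2 : s * r⁻¹ * s⁻¹ = r ^ (-t) := by
        have : (s * r * s⁻¹)⁻¹ = s * r⁻¹ * s⁻¹ := by group
        rw [← this, hconj, ← zpow_neg]
      rw [e1, e2, sub_eq_add_neg, zpow_add, zpow_one]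
    have hcin : r ^ (1 - t) ∈ M := by
      have h1 : r * x * r⁻¹ ∈ M := hM.conj_mem x hxM r
      have h4 := mul_mem h1 (inv_mem hxM)
      rwa [hcomm] at h4
    have hL : zpowers (r ^ (1 - t)) ≤ M ⊓ zpowers r :=
      le_inf (zpowers_le.mpr hcin) (zpowers_le.mpr (zpow_mem (mem_zpowers r) _))
    have hcardL : (2:ℕ) ^ (m - 2) ≤ Nat.card (M ⊓ zpowers r : Subgroup P) := by
      have h5 := Subgroup.card_le_of_le hL
      rwa [Nat.card_zpowers, h1t] at h5
    have hdvd : Nat.card (M ⊓ zpowers r : Subgroup P) ∣ 2 ^ n :=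
      hMcard ▸ Subgroup.card_dvd_of_le inf_le_left
    have hle : Nat.card (M ⊓ zpowers r : Subgroup P) ≤ 2 ^ n :=
      Nat.le_of_dvd (by positivity) hdvd
    have h2n : (2:ℕ) ^ n ≤ 2 ^ (m - 2) := Nat.pow_le_pow_right (by norm_num) hnm
    have heq : M ⊓ zpowers r = M :=
      Subgroup.eq_of_le_of_card_ge inf_le_left (by omega)
    have : x ∈ M ⊓ zpowers r := by rw [heq]; exact hxM
    exact hxr this.2
  have hMN : M ≤ zpowers g := by
    intro x hx
    obtain ⟨j, hj⟩ := mem_zpowers_iff.mp (hMr hx)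
    have hx1 : x ^ ((2:ℕ) ^ n) = 1 := by
      have h6 := pow_card_eq_one' (G := M) (x := ⟨x, hx⟩)
      rw [hMcard] at h6
      have := congrArg (Subgroup.subtype M) h6
      simpa using this
    have hdvd7 : ((2:ℤ) ^ (m-1)) ∣ j * 2 ^ n := by
      have : (orderOf r : ℤ) ∣ j * 2 ^ n := by
        rw [orderOf_dvd_iff_zpow_eq_one, zpow_mul, hj]
        rw [show ((2:ℤ) ^ n) = ((2 ^ n : ℕ) : ℤ) by push_cast; ring, zpow_natCast]
        exact hx1
      rw [hr] at this
      exact_mod_cast this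
    have hdvd8 : (2:ℤ) ^ k ∣ j := by
      have e : (2:ℤ) ^ (m-1) = 2 ^ k * 2 ^ n := by rw [← pow_add, hkn]
      rw [e] at hdvd7
      exact (mul_dvd_mul_iff_right (pow_ne_zero n (two_ne_zero))).mp hdvd7
    obtain ⟨j', hj'⟩ := hdvd8
    rw [mem_zpowers_iff]
    refine ⟨j', ?_⟩
    rw [hg, ← zpow_natCast r, ← zpow_mul, ← hj, hj']
    congr 1
  exact Subgroup.eq_of_le_of_card_ge hMN (by rw [hcardN, hMcard])

lemma core_neg1 {P : Type*} [Group P] [Finite P] (m : ℕ) (hm : 3 ≤ m)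
    (hcard : Nat.card P = 2 ^ m) (r s : P) (hr : orderOf r = 2 ^ (m - 1))
    (hcl : Subgroup.closure {r, s} = ⊤) (hconj : s * r * s⁻¹ = r⁻¹) :
    ∀ n : ℕ, 1 < 2 ^ n → 2 ^ n < Nat.card P / 2 →
      ∃ N : Subgroup P, N.Normal ∧ Nat.card N = 2 ^ n ∧ IsCyclic N ∧
        ∀ M : Subgroup P, M.Normal → Nat.card M = 2 ^ n → M = N := by
  refine core m hm hcard r s hr hcl (-1) ?_ ?_ ?_
  · rw [zpow_neg, zpow_one]; exact hconj
  · norm_num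
  · have h1 : (1 - (-1) : ℤ) = ((2 : ℕ) : ℤ) := by norm_num
    rw [h1, zpow_natCast, orderOf_pow, hr,
      Nat.gcd_eq_right (dvd_pow_self 2 (by omega : m - 1 ≠ 0))]
    rw [show m - 1 = (m - 2) + 1 by omega, pow_succ, Nat.mul_div_cancel _ two_pos]

lemma core_equiv {P G : Type*} [Group P] [Finite P] [Group G] (e : P ≃* G) (m : ℕ)
    (hm : 3 ≤ m) (hcardG : Nat.card G = 2 ^ m) (r s : G) (hr : orderOf r = 2 ^ (m - 1))
    (hcl : Subgroup.closure {r, s} = ⊤) (hconj : s * r * s⁻¹ = r⁻¹) :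
    ∀ n : ℕ, 1 < 2 ^ n → 2 ^ n < Nat.card P / 2 →
      ∃ N : Subgroup P, N.Normal ∧ Nat.card N = 2 ^ n ∧ IsCyclic N ∧
        ∀ M : Subgroup P, M.Normal → Nat.card M = 2 ^ n → M = N := by
  have hcard : Nat.card P = 2 ^ m := by rw [Nat.card_congr e.toEquiv, hcardG]
  have hr' : orderOf (e.symm r) = 2 ^ (m - 1) :=
    (orderOf_injective e.symm.toMonoidHom e.symm.injective r).trans hr
  have hcl' : Subgroup.closure {e.symm r, e.symm s} = ⊤ := by
    have h1 : (Subgroup.closure {r, s}).map e.symm.toMonoidHom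
        = Subgroup.closure (e.symm '' {r, s}) := MonoidHom.map_closure _ _
    rw [hcl, Set.image_insert_eq, Set.image_singleton,
      Subgroup.map_top_of_surjective _ e.symm.surjective] at h1
    exact h1.symm
  have hconj' : e.symm s * e.symm r * (e.symm s)⁻¹ = (e.symm r)⁻¹ := by
    have h2 := congrArg e.symm hconj
    simpa [map_mul, map_inv] using h2
  exact core_neg1 m hm hcard _ _ hr' hcl' hconj'

lemma dihedral_closure (N : ℕ) [NeZero N] :
    Subgroup.closure {(DihedralGroup.r 1 : DihedralGroup N), DihedralGroup.sr 0} = ⊤ := by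
  refine le_antisymm le_top fun x _ => ?_
  have hr1 : (DihedralGroup.r 1 : DihedralGroup N) ∈
      Subgroup.closure {(DihedralGroup.r 1 : DihedralGroup N), DihedralGroup.sr 0} :=
    subset_closure (Set.mem_insert _ _)
  have hs0 : (DihedralGroup.sr 0 : DihedralGroup N) ∈
      Subgroup.closure {(DihedralGroup.r 1 : DihedralGroup N), DihedralGroup.sr 0} :=
    subset_closure (Set.mem_insert_of_mem _ rfl)
  have hri : ∀ i : ZMod N, (DihedralGroup.r i : DihedralGroup N) ∈
      Subgroup.closure {(DihedralGroup.r 1 : DihedralGroup N), DihedralGroup.sr 0} := by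
    intro i
    have : (DihedralGroup.r 1 : DihedralGroup N) ^ i.val = DihedralGroup.r i := by
      rw [DihedralGroup.r_one_pow, ZMod.natCast_rightInverse i]
    exact this ▸ pow_mem hr1 _
  cases x with
  | r i => exact hri i
  | sr i =>
    have : (DihedralGroup.sr 0 : DihedralGroup N) * DihedralGroup.r i = DihedralGroup.sr i := by
      rw [DihedralGroup.sr_mul_r, zero_add]
    exact this ▸ mul_mem hs0 (hri i)

lemma dihedral_conj (N : ℕ) :
    (DihedralGroup.sr 0 : DihedralGroup N) * DihedralGroup.r 1 * (DihedralGroup.sr 0)⁻¹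
      = (DihedralGroup.r 1)⁻¹ := by
  have hinv : (DihedralGroup.sr 0 : DihedralGroup N)⁻¹ = DihedralGroup.sr 0 :=
    inv_eq_of_mul_eq_one_right (by rw [DihedralGroup.sr_mul_sr, sub_zero, DihedralGroup.one_def])
  have hrinv : (DihedralGroup.r 1 : DihedralGroup N)⁻¹ = DihedralGroup.r (-1) :=
    inv_eq_of_mul_eq_one_right (by rw [DihedralGroup.r_mul_r, add_neg_cancel, DihedralGroup.one_def])
  rw [hinv, hrinv, DihedralGroup.sr_mul_r, zero_add, DihedralGroup.sr_mul_sr]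
  norm_num

lemma quaternion_closure (N : ℕ) [NeZero N] :
    Subgroup.closure {(QuaternionGroup.a 1 : QuaternionGroup N), QuaternionGroup.xa 0} = ⊤ := by
  refine le_antisymm le_top fun x _ => ?_
  have ha1 : (QuaternionGroup.a 1 : QuaternionGroup N) ∈
      Subgroup.closure {(QuaternionGroup.a 1 : QuaternionGroup N), QuaternionGroup.xa 0} :=
    subset_closure (Set.mem_insert _ _)
  have hx0 : (QuaternionGroup.xa 0 : QuaternionGroup N) ∈
      Subgroup.closure {(QuaternionGroup.a 1 : QuaternionGroup N), QuaternionGroup.xa 0} :=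
    subset_closure (Set.mem_insert_of_mem _ rfl)
  have hai : ∀ i : ZMod (2 * N), (QuaternionGroup.a i : QuaternionGroup N) ∈
      Subgroup.closure {(QuaternionGroup.a 1 : QuaternionGroup N), QuaternionGroup.xa 0} := by
    intro i
    have : (QuaternionGroup.a 1 : QuaternionGroup N) ^ i.val = QuaternionGroup.a i := by
      rw [QuaternionGroup.a_one_pow, ZMod.natCast_rightInverse i]
    exact this ▸ pow_mem ha1 _
  cases x with
  | a i => exact hai i
  | xa i =>
    have : (QuaternionGroup.xa 0 : QuaternionGroup N) * QuaternionGroup.a i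
        = QuaternionGroup.xa i := by
      rw [QuaternionGroup.xa_mul_a, zero_add]
    exact this ▸ mul_mem hx0 (hai i)

lemma quaternion_conj (N : ℕ) :
    (QuaternionGroup.xa 0 : QuaternionGroup N) * QuaternionGroup.a 1 * (QuaternionGroup.xa 0)⁻¹
      = (QuaternionGroup.a 1)⁻¹ := by
  have hNN : ((N : ZMod (2 * N)) + N : ZMod (2 * N)) = 0 := by
    have h4 : ((N : ZMod (2 * N)) + N : ZMod (2 * N)) = ((2 * N : ℕ) : ZMod (2 * N)) := by
      push_cast; ring
    rw [h4, ZMod.natCast_self]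
  have hinv : (QuaternionGroup.xa 0 : QuaternionGroup N)⁻¹ = QuaternionGroup.xa N :=
    inv_eq_of_mul_eq_one_right (by
      rw [QuaternionGroup.xa_mul_xa, sub_zero, hNN, QuaternionGroup.one_def])
  have hainv : (QuaternionGroup.a 1 : QuaternionGroup N)⁻¹ = QuaternionGroup.a (-1) :=
    inv_eq_of_mul_eq_one_right (by
      rw [QuaternionGroup.a_mul_a, add_neg_cancel, QuaternionGroup.one_def])
  rw [hinv, hainv, QuaternionGroup.xa_mul_a, zero_add, QuaternionGroup.xa_mul_xa]
  congr 1
  rw [hNN, zero_sub]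


theorem stmt5 {P : Type*} [Group P] [Finite P] (hcard : 16 ≤ Nat.card P)
    (h : IsDihedral2Group P ∨ IsSemidihedralGroup P ∨ IsGeneralizedQuaternion2Group P) :
    ∀ n : ℕ, 1 < 2 ^ n → 2 ^ n < Nat.card P / 2 →
      ∃ N : Subgroup P, N.Normal ∧ Nat.card N = 2 ^ n ∧ IsCyclic N ∧
        ∀ M : Subgroup P, M.Normal → Nat.card M = 2 ^ n → M = N := by
  rcases h with ⟨q, hq, ⟨e⟩⟩ | hsd | ⟨q, hq, ⟨e⟩⟩
  · haveI : NeZero ((2:ℕ) ^ q) := ⟨pow_ne_zero _ two_ne_zero⟩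
    refine core_equiv e (q + 1) (by omega) ?_ _ _ ?_ (dihedral_closure _) (dihedral_conj _)
    · rw [DihedralGroup.nat_card, pow_succ]; ring
    · rw [DihedralGroup.orderOf_r_one]; congr 1
  · obtain ⟨nn, hnn4, hcardP, r, s, hr, hs, hconj, hcl⟩ := hsd
    obtain ⟨p, rfl⟩ : ∃ p, nn = p + 4 := ⟨nn - 4, by omega⟩
    have h2le : (2:ℕ) ≤ 2 ^ (p + 2) := by
      calc (2:ℕ) = 2 ^ 1 := rfl
      _ ≤ 2 ^ (p + 2) := Nat.pow_le_pow_right (by norm_num) (by omega)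
    refine core (p + 4) (by omega) hcardP r s hr hcl ((2:ℤ) ^ (p + 2) - 1) ?_ ?_ ?_
    · rw [hconj]
      rw [show p + 4 - 2 = p + 2 by omega, ← zpow_natCast r]
      congr 1
      push_cast [Nat.cast_sub (by omega : 1 ≤ 2 ^ (p + 2))]
      ring
    · set t : ℤ := 2 ^ (p + 2) - 1 with ht
      have hdvd : (orderOf r : ℤ) ∣ (t * t - 1) := by
        rw [hr, show p + 4 - 1 = p + 3 by omega]
        push_cast
        exact ⟨2 ^ (p + 1) - 1, by rw [ht]; ring⟩
      have h1 : r ^ (t * t - 1) = 1 := orderOf_dvd_iff_zpow_eq_one.mp hdvd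
      rw [show t * t = (t * t - 1) + 1 by ring, zpow_add, h1, one_mul, zpow_one]
    · have e1 : (1 - ((2:ℤ) ^ (p + 2) - 1)) = -(((2 ^ (p + 2) - 2 : ℕ) : ℤ)) := by
        push_cast [Nat.cast_sub (by omega : 2 ≤ 2 ^ (p + 2))]
        ring
      rw [e1, zpow_neg, zpow_natCast, orderOf_inv]
      have h2 : (2:ℕ) ^ (p + 2) = 2 * 2 ^ (p + 1) := by rw [pow_succ]; ring
      have h3 : (2:ℕ) ^ (p + 1) = 2 * 2 ^ p := by rw [pow_succ]; ring
      have hodd : Odd (2 ^ (p + 1) - 1 : ℕ) := ⟨2 ^ p - 1, by omega⟩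
      have hc : (2:ℕ) ^ (p + 2) - 2 = 2 * (2 ^ (p + 1) - 1) := by omega
      rw [orderOf_pow, hr, hc, show p + 4 - 1 = p + 3 by omega,
        show (2:ℕ) ^ (p + 3) = 2 * 2 ^ (p + 2) by rw [pow_succ]; ring,
        Nat.gcd_mul_left]
      have hcop : Nat.Coprime (2 ^ (p + 2)) (2 ^ (p + 1) - 1) :=
        Nat.Coprime.pow_left _ (Nat.coprime_two_left.mpr hodd)
      rw [hcop]
      rw [show p + 4 - 2 = p + 2 by omega]
      omega
  · haveI : NeZero ((2:ℕ) ^ q) := ⟨pow_ne_zero _ two_ne_zero⟩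
    refine core_equiv e (q + 2) (by omega) ?_ _ _ ?_ (quaternion_closure _) (quaternion_conj _)
    · rw [Nat.card_eq_fintype_card, QuaternionGroup.card]
      rw [show q + 2 = q + 1 + 1 by omega, pow_succ, pow_succ]; ring
    · rw [QuaternionGroup.orderOf_a_one, show q + 2 - 1 = q + 1 by omega, pow_succ]; ring
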